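/- Every unipolar graph G has a proper vertex coloring using exactly ω(G) colors; that is, the chromatic number of a unipolar graph equals its clique number. -/

import Mathlib

/-- A clique split of a graph `G`: the vertex set is partitioned into a center clique `H`
and peripheral cliques `P 0, …, P (k-1)` with no edges between distinct peripheral cliques. -/
structure IsCliqueSplit {V : Type*} (G : SimpleGraph V) (H : Set V) {k : ℕ}
    (P : Fin k → Set V) : Prop where
  center_clique : G.IsClique H
  periph_clique : ∀ i, G.IsClique (P i)
  center_disj : ∀ i, Disjoint H (P i)
  periph_disj : ∀ i j, i ≠ j → Disjoint (P i) (P j)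
  covers : H ∪ (⋃ i, P i) = Set.univ
  no_cross : ∀ i j, i ≠ j → ∀ u ∈ P i, ∀ v ∈ P j, ¬ G.Adj u v

/-- A graph is unipolar if it admits a clique split. -/
def Unipolar {V : Type*} (G : SimpleGraph V) : Prop :=
  ∃ (H : Set V) (k : ℕ) (P : Fin k → Set V), IsCliqueSplit G H P
/-- The clique number of `G`, as the supremum of the sizes of cliques. -/
noncomputable def cliqueNum' {V : Type*} (G : SimpleGraph V) : ℕ :=
  sSup {n | ∃ s : Set V, G.IsClique s ∧ s.ncard = n}

lemma clique_ncard_le_cliqueNum' {V : Type*} [Fintype V] (G : SimpleGraph V)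
    {s : Set V} (hs : G.IsClique s) : s.ncard ≤ cliqueNum' G := by
  apply le_csSup
  · refine ⟨Fintype.card V, ?_⟩
    rintro n ⟨u, -, rfl⟩
    calc u.ncard ≤ (Set.univ : Set V).ncard :=
          Set.ncard_le_ncard (Set.subset_univ u) Set.finite_univ
      _ = Fintype.card V := by rw [Set.ncard_univ, Nat.card_eq_fintype_card]
  · exact ⟨s, hs, rfl⟩

lemma unipolar_colorable {V : Type*} [Fintype V] (G : SimpleGraph V)
    (hG : Unipolar G) : G.Colorable (cliqueNum' G) := by
  classical
  obtain ⟨H, k, P, hsp⟩ := hG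
  set ω := cliqueNum' G with hωdef
  cases isEmpty_or_nonempty V
  · exact ⟨SimpleGraph.Coloring.mk (fun v => isEmptyElim v) (fun {a b} h => isEmptyElim a)⟩
  -- ω ≥ 1
  have hω : 0 < ω := by
    have h1 : ({Classical.arbitrary V} : Set V).ncard ≤ ω :=
      clique_ncard_le_cliqueNum' G (G.isClique_singleton _)
    simp [Set.ncard_singleton] at h1; omega
  haveI : Nonempty (Fin ω) := ⟨⟨0, hω⟩⟩
  -- embedding of H into colors
  haveI : Fintype ↥H := Fintype.ofFinite _
  have hHcard : Fintype.card ↥H ≤ Fintype.card (Fin ω) := by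
    have h1 : H.ncard ≤ ω := clique_ncard_le_cliqueNum' G hsp.center_clique
    rw [Fintype.card_fin]
    rwa [← Nat.card_coe_set_eq, Nat.card_eq_fintype_card] at h1
  obtain ⟨φ⟩ := Function.Embedding.nonempty_of_card_le hHcard
  -- allowed colors for a vertex
  set t : V → Finset (Fin ω) :=
    fun v => Finset.univ.filter (fun c => ∀ h : ↥H, G.Adj v ↑h → φ h ≠ c) with ht
  -- Hall's theorem on each peripheral clique
  have key : ∀ i : Fin k, ∃ g : V → Fin ω, Set.InjOn g (P i) ∧ ∀ v ∈ P i, g v ∈ t v := by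
    intro i
    have hall : ∀ s : Finset ↥(P i), s.card ≤ (s.biUnion (fun v => t ↑v)).card := by
      intro s
      rcases s.eq_empty_or_nonempty with rfl | ⟨v0, hv0⟩
      · simp
      set A : Finset V := s.image Subtype.val with hA
      set Nf : Finset V := H.toFinset.filter (fun h => ∀ v ∈ s, G.Adj (v : V) h) with hNf
      have hNfH : ∀ x ∈ Nf, x ∈ H := fun x hx => by
        simpa using (Finset.mem_filter.mp hx).1
      have hAP : ∀ x ∈ A, x ∈ P i := by
        intro x hx
        obtain ⟨vx, hvx, rfl⟩ := Finset.mem_image.mp hx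
        exact vx.2
      have hAcard : A.card = s.card := Finset.card_image_of_injective s Subtype.val_injective
      have hdisj : Disjoint A Nf := by
        rw [Finset.disjoint_left]
        intro x hxA hxN
        exact (Set.disjoint_left.mp (hsp.center_disj i)) (hNfH x hxN) (hAP x hxA)
      have hclq : G.IsClique (↑(A ∪ Nf) : Set V) := by
        intro x hx y hy hxy
        have hx' : x ∈ A ∨ x ∈ Nf := by simpa using hx
        have hy' : y ∈ A ∨ y ∈ Nf := by simpa using hy
        rcases hx' with hxA | hxN <;> rcases hy' with hyA | hyN
        · exact hsp.periph_clique i (hAP x hxA) (hAP y hyA) hxy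
        · obtain ⟨vx, hvx, rfl⟩ := Finset.mem_image.mp hxA
          exact (Finset.mem_filter.mp hyN).2 vx hvx
        · obtain ⟨vy, hvy, rfl⟩ := Finset.mem_image.mp hyA
          exact ((Finset.mem_filter.mp hxN).2 vy hvy).symm
        · exact hsp.center_clique (hNfH x hxN) (hNfH y hyN) hxy
      have h1 : A.card + Nf.card ≤ ω := by
        have h2 := clique_ncard_le_cliqueNum' G hclq
        rwa [Set.ncard_coe_finset, Finset.card_union_of_disjoint hdisj] at h2
      set B : Finset (Fin ω) := s.biUnion (fun v => t ↑v) with hB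
      -- each missing color corresponds to a common neighbor in H
      have h2 : (Finset.univ \ B).card ≤ Nf.card := by
        have hex : ∀ c ∈ Finset.univ \ B,
            ∃ h : ↥H, (∀ v ∈ s, G.Adj (v : V) ↑h) ∧ φ h = c := by
          intro c hc
          have hcB : c ∉ B := (Finset.mem_sdiff.mp hc).2
          have hnot : ∀ v ∈ s, ∃ h : ↥H, G.Adj (v : V) ↑h ∧ φ h = c := by
            intro v hv
            have : c ∉ t ↑v := fun hmem => hcB (Finset.mem_biUnion.mpr ⟨v, hv, hmem⟩)
            simp only [ht, Finset.mem_filter, Finset.mem_univ, true_and, not_forall,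
              not_ne_iff] at this
            obtain ⟨h, hh1, hh2⟩ := this
            exact ⟨h, hh1, hh2⟩
          obtain ⟨h0, hadj0, hphi0⟩ := hnot v0 hv0
          refine ⟨h0, ?_, hphi0⟩
          intro v hv
          obtain ⟨h, hadj, hphi⟩ := hnot v hv
          have : h = h0 := φ.injective (by rw [hphi, hphi0])
          exact this ▸ hadj
        set F : Fin ω → V := fun c =>
          if hc : ∃ h : ↥H, (∀ v ∈ s, G.Adj (v : V) ↑h) ∧ φ h = c
          then (↑hc.choose : V) else (↑v0 : V) with hF
        apply Finset.card_le_card_of_injOn F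
        · intro c hc
          have hcc := hex c hc
          rw [hF]
          simp only [dif_pos hcc]
          refine Finset.mem_filter.mpr ⟨Set.mem_toFinset.mpr hcc.choose.2, ?_⟩
          exact hcc.choose_spec.1
        · intro c hc c' hc' hFeq
          have hcc := hex c hc
          have hcc' := hex c' hc'
          rw [hF] at hFeq
          simp only [dif_pos hcc, dif_pos hcc'] at hFeq
          have : hcc.choose = hcc'.choose := Subtype.val_injective hFeq
          rw [← hcc.choose_spec.2, ← hcc'.choose_spec.2, this]
      have h3 : (Finset.univ \ B).card = ω - B.card := by
        rw [Finset.card_sdiff_of_subset (Finset.subset_univ B)]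
        simp
      have hBle : B.card ≤ ω := by
        calc B.card ≤ (Finset.univ : Finset (Fin ω)).card := Finset.card_le_card (Finset.subset_univ _)
          _ = ω := by simp
      omega
    obtain ⟨f, hfinj, hfmem⟩ :=
      (Finset.all_card_le_biUnion_card_iff_existsInjective' (fun v : ↥(P i) => t ↑v)).mp hall
    refine ⟨fun v => if hv : v ∈ P i then f ⟨v, hv⟩ else Classical.arbitrary _, ?_, ?_⟩
    · intro x hx y hy hxy
      simp only [dif_pos hx, dif_pos hy] at hxy
      exact Subtype.ext_iff.mp (hfinj hxy)
    · intro v hv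
      simp only [dif_pos hv]
      exact hfmem ⟨v, hv⟩
  choose g hg_inj hg_mem using key
  -- index of a peripheral vertex
  have hcover : ∀ v : V, v ∉ H → ∃ i, v ∈ P i := by
    intro v hv
    have hmem : v ∈ H ∪ ⋃ i, P i := by rw [hsp.covers]; trivial
    rcases hmem with h | h
    · exact absurd h hv
    · exact Set.mem_iUnion.mp h
  choose idx hidx using hcover
  refine ⟨SimpleGraph.Coloring.mk
    (fun v => if hv : v ∈ H then φ ⟨v, hv⟩ else g (idx v hv) v) ?_⟩
  intro a b hab heq
  by_cases ha : a ∈ H <;> by_cases hb : b ∈ H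
  · simp only [dif_pos ha, dif_pos hb] at heq
    exact G.ne_of_adj hab (congrArg Subtype.val (φ.injective heq))
  · simp only [dif_pos ha, dif_neg hb] at heq
    have hmem := hg_mem (idx b hb) b (hidx b hb)
    simp only [ht, Finset.mem_filter, Finset.mem_univ, true_and] at hmem
    exact hmem ⟨a, ha⟩ hab.symm heq
  · simp only [dif_neg ha, dif_pos hb] at heq
    have hmem := hg_mem (idx a ha) a (hidx a ha)
    simp only [ht, Finset.mem_filter, Finset.mem_univ, true_and] at hmem
    exact hmem ⟨b, hb⟩ hab heq.symm
  · simp only [dif_neg ha, dif_neg hb] at heq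
    rcases eq_or_ne (idx a ha) (idx b hb) with hij | hij
    · rw [← hij] at heq
      have hbmem : b ∈ P (idx a ha) := hij ▸ hidx b hb
      exact G.ne_of_adj hab (hg_inj (idx a ha) (hidx a ha) hbmem heq)
    · exact hsp.no_cross (idx a ha) (idx b hb) hij a (hidx a ha) b (hidx b hb) hab

/-- Every unipolar graph `G` has a proper vertex coloring using exactly `ω(G)` colors;
that is, the chromatic number of a unipolar graph equals its clique number. -/
theorem unipolar_chromatic_eq_clique {V : Type*} [Fintype V] (G : SimpleGraph V)
    (hG : Unipolar G) :
    G.Colorable (cliqueNum' G) ∧ G.chromaticNumber = (cliqueNum' G : ℕ∞) := by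
  classical
  have hcol := unipolar_colorable G hG
  refine ⟨hcol, le_antisymm hcol.chromaticNumber_le ?_⟩
  have hbdd : BddAbove {n | ∃ s : Set V, G.IsClique s ∧ s.ncard = n} := by
    refine ⟨Fintype.card V, ?_⟩
    rintro n ⟨u, -, rfl⟩
    calc u.ncard ≤ (Set.univ : Set V).ncard :=
          Set.ncard_le_ncard (Set.subset_univ u) Set.finite_univ
      _ = Fintype.card V := by rw [Set.ncard_univ, Nat.card_eq_fintype_card]
  have hmem : cliqueNum' G ∈ {n | ∃ s : Set V, G.IsClique s ∧ s.ncard = n} :=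
    Nat.sSup_mem ⟨0, ∅, by simp⟩ hbdd
  obtain ⟨s, hsclq, hscard⟩ := hmem
  have hfin : s.Finite := Set.toFinite s
  have hclq' : G.IsClique (↑hfin.toFinset : Set V) := by rwa [Set.Finite.coe_toFinset]
  have := hclq'.card_le_chromaticNumber
  rwa [← Set.ncard_eq_toFinset_card s hfin, hscard] at this
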